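/- Let n/2 < k ≤ n and λ ∈ ℝⁿ with λ₁ = ⋯ = λ_{n−1} = b, λₙ = a, and suppose λ ∈ Γ̄_k. Then b ≥ 0 and a + ((n−k)/k)·b ≥ 0. -/

import Mathlib

open Set Filter

/-- The `j`-th elementary symmetric polynomial of `l : Fin n → ℝ`. -/
noncomputable def esymm (n j : ℕ) (l : Fin n → ℝ) : ℝ :=
  ∑ s ∈ Finset.powersetCard j (Finset.univ : Finset (Fin n)), ∏ i ∈ s, l i

/-- The Gårding cone `Γ_k = {λ : σ_j(λ) > 0, j = 1, …, k}`. -/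
def GammaCone (n k : ℕ) : Set (Fin n → ℝ) :=
  {l | ∀ j : ℕ, 1 ≤ j → j ≤ k → 0 < esymm n j l}

lemma esymm_eval (n j : ℕ) (a b : ℝ) (l : Fin n → ℝ) (m : Fin n)
    (hb : ∀ i, i ≠ m → l i = b) (ha : l m = a) :
    esymm n (j+1) l = ((n-1).choose (j+1) : ℝ) * b^(j+1)
      + ((n-1).choose j : ℝ) * (a * b^j) := by
  classical
  have hm : m ∉ Finset.univ.erase m := Finset.notMem_erase m _
  have huniv : (Finset.univ : Finset (Fin n)) = insert m (Finset.univ.erase m) :=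
    (Finset.insert_erase (Finset.mem_univ m)).symm
  have hcard : (Finset.univ.erase m).card = n - 1 := by
    rw [Finset.card_erase_of_mem (Finset.mem_univ m), Finset.card_univ, Fintype.card_fin]
  have hdisj : Disjoint (Finset.powersetCard (j+1) (Finset.univ.erase m))
      ((Finset.powersetCard j (Finset.univ.erase m)).image (insert m)) := by
    rw [Finset.disjoint_left]
    intro s hs hs'
    obtain ⟨t, ht, rfl⟩ := Finset.mem_image.1 hs'
    have := (Finset.mem_powersetCard.1 hs).1 (Finset.mem_insert_self m t)
    exact hm this
  rw [esymm, huniv, Finset.powersetCard_succ_insert hm, Finset.sum_union hdisj]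
  have h1 : ∑ s ∈ Finset.powersetCard (j+1) (Finset.univ.erase m), ∏ i ∈ s, l i
      = ((n-1).choose (j+1) : ℝ) * b^(j+1) := by
    rw [Finset.sum_congr rfl (fun s hs => ?_), Finset.sum_const, nsmul_eq_mul,
      Finset.card_powersetCard, hcard]
    obtain ⟨hsub, hcs⟩ := Finset.mem_powersetCard.1 hs
    rw [Finset.prod_congr rfl (fun i hi => hb i (Finset.ne_of_mem_erase (hsub hi))),
      Finset.prod_const, hcs]
  have h2 : ∑ s ∈ (Finset.powersetCard j (Finset.univ.erase m)).image (insert m), ∏ i ∈ s, l i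
      = ((n-1).choose j : ℝ) * (a * b^j) := by
    rw [Finset.sum_image ?inj]
    · rw [Finset.sum_congr rfl (fun s hs => ?_), Finset.sum_const, nsmul_eq_mul,
        Finset.card_powersetCard, hcard]
      obtain ⟨hsub, hcs⟩ := Finset.mem_powersetCard.1 hs
      have hms : m ∉ s := fun h => hm (hsub h)
      rw [Finset.prod_insert hms, ha,
        Finset.prod_congr rfl (fun i hi => hb i (Finset.ne_of_mem_erase (hsub hi))),
        Finset.prod_const, hcs]
    · intro s1 hs1 s2 hs2 h
      have hm1 : m ∉ s1 := fun h' => hm ((Finset.mem_powersetCard.1 hs1).1 h')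
      have hm2 : m ∉ s2 := fun h' => hm ((Finset.mem_powersetCard.1 hs2).1 h')
      rw [← Finset.erase_insert hm1, h, Finset.erase_insert hm2]
  rw [h1, h2]

/-- For `n/2 < k ≤ n`, if `λ = (b, …, b, a) ∈ Γ̄_k`, then `b ≥ 0` and
`a + ((n-k)/k) b ≥ 0`. -/
theorem stmt7 (n k : ℕ) (hn : 2 ≤ n) (hk1 : (n : ℝ) / 2 < k) (hk2 : k ≤ n)
    (a b : ℝ) (l : Fin n → ℝ)
    (hb : ∀ i : Fin n, (i : ℕ) < n - 1 → l i = b)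
    (ha : l ⟨n - 1, by omega⟩ = a)
    (hl : l ∈ closure (GammaCone n k)) :
    0 ≤ b ∧ 0 ≤ a + (((n : ℝ) - k) / k) * b := by
  have hk0 : 2 ≤ k := by
    have h2n : (2:ℝ) ≤ n := by exact_mod_cast hn
    have h1k : (1:ℝ) < k := lt_of_le_of_lt (by linarith) hk1
    have : 1 < k := by exact_mod_cast h1k
    omega
  set m : Fin n := ⟨n-1, by omega⟩ with hm
  have hb' : ∀ i, i ≠ m → l i = b := by
    intro i hi
    have hlt := i.isLt
    have hne : (i:ℕ) ≠ n-1 := fun h => hi (Fin.ext h)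
    exact hb i (by omega)
  have hσ : ∀ j, 1 ≤ j → j ≤ k → 0 ≤ esymm n j l := by
    intro j hj1 hj2
    have hcont : Continuous (esymm n j) :=
      continuous_finset_sum _ fun s _ => continuous_finset_prod _ fun i _ => continuous_apply i
    exact closure_minimal (fun x hx => (hx j hj1 hj2).le)
      (isClosed_le continuous_const hcont) hl
  have hnR : (2:ℝ) ≤ n := by exact_mod_cast hn
  have hn1 : ((n-1 : ℕ) : ℝ) = (n:ℝ) - 1 := by
    push_cast [Nat.cast_sub (by omega : 1 ≤ n)]; ring
  -- sigma_1
  have h1 := hσ 1 le_rfl (by omega)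
  rw [show (1:ℕ) = 0+1 from rfl, esymm_eval n 0 a b l m hb' ha] at h1
  simp [Nat.choose_one_right] at h1
  rw [hn1] at h1
  -- h1 : 0 ≤ ((n:ℝ)-1) * b + a
  -- sigma_2
  have h2 := hσ 2 (by omega) hk0
  rw [show (2:ℕ) = 1+1 from rfl, esymm_eval n 1 a b l m hb' ha] at h2
  rw [Nat.choose_one_right, hn1, pow_one] at h2
  norm_num at h2
  have hc2 : 2 * ((n-1).choose 2) = (n-1) * (n-1-1) := by
    have h := Nat.choose_two_right (n-1)
    have h2d : 2 ∣ (n-1) * (n-1-1) := (Nat.even_mul_pred_self (n-1)).two_dvd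
    omega
  have hc2R : 2 * (((n-1).choose 2 : ℕ) : ℝ) = ((n:ℝ)-1) * ((n:ℝ)-2) := by
    calc 2 * (((n-1).choose 2 : ℕ) : ℝ) = (((2 * (n-1).choose 2 : ℕ)):ℝ) := by push_cast; ring
    _ = (((n-1)*(n-1-1) : ℕ):ℝ) := by rw [hc2]
    _ = ((n:ℝ)-1) * ((n:ℝ)-2) := by
        rw [show n-1-1 = n-2 from by omega]
        push_cast [Nat.cast_sub (by omega : 1 ≤ n), Nat.cast_sub hn]; ring
  -- b ≥ 0
  have hbnn : 0 ≤ b := by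
    by_contra hneg
    push_neg at hneg
    have hbb : 0 < b * b := mul_pos_of_neg_of_neg hneg hneg
    have hab : a * b ≤ -(((n:ℝ)-1) * (b*b)) := by
      nlinarith [mul_nonneg (neg_nonneg.2 hneg.le) h1]
    have habn : ((n:ℝ)-1) * (a * b) ≤ ((n:ℝ)-1) * (-(((n:ℝ)-1) * (b*b))) :=
      mul_le_mul_of_nonneg_left hab (by linarith)
    nlinarith [h2, hc2R, mul_pos (mul_pos (show (0:ℝ) < (n:ℝ)-1 by linarith)
      (show (0:ℝ) < (n:ℝ) by linarith)) hbb]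
  refine ⟨hbnn, ?_⟩
  -- sigma_k
  obtain ⟨k', rfl⟩ : ∃ k', k = k' + 1 := ⟨k-1, by omega⟩
  have hk := hσ (k'+1) (by omega) le_rfl
  rw [esymm_eval n k' a b l m hb' ha] at hk
  have hid : (n-1).choose (k'+1) * (k'+1) = (n-1).choose k' * (n-1-k') :=
    Nat.choose_succ_right_eq (n-1) k'
  have hidR : ((n-1).choose (k'+1) : ℝ) * ((k':ℝ)+1) = ((n-1).choose k' : ℝ) * ((n:ℝ) - ((k':ℝ)+1)) := by
    have h := congrArg (Nat.cast : ℕ → ℝ) hid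
    push_cast [Nat.cast_sub (by omega : k' ≤ n-1), Nat.cast_sub (by omega : 1 ≤ n)] at h
    linarith
  have hck' : 0 < ((n-1).choose k' : ℝ) := by
    exact_mod_cast Nat.choose_pos (by omega : k' ≤ n-1)
  have hkpos : (0:ℝ) < (k':ℝ) + 1 := by positivity
  push_cast
  rcases eq_or_lt_of_le hbnn with hb0 | hbpos
  · rw [← hb0] at h1 ⊢
    have h1' : 0 ≤ a := by linarith
    simpa using h1'
  · have hbk : 0 < b ^ k' := pow_pos hbpos k'
    have key : 0 ≤ ((n-1).choose (k'+1) : ℝ) * b + ((n-1).choose k' : ℝ) * a := by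
      rw [pow_succ] at hk
      nlinarith [hk, hbk]
    have h3 : 0 ≤ ((n-1).choose k' : ℝ) * (((k':ℝ)+1) * a + ((n:ℝ) - ((k':ℝ)+1)) * b) := by
      calc (0:ℝ) ≤ ((k':ℝ)+1) * (((n-1).choose (k'+1) : ℝ) * b + ((n-1).choose k' : ℝ) * a) :=
            mul_nonneg hkpos.le key
        _ = ((n-1).choose k' : ℝ) * (((k':ℝ)+1) * a + ((n:ℝ) - ((k':ℝ)+1)) * b) := by
            linear_combination b * hidR
    have hgoal : 0 ≤ (((k':ℝ)+1) * a + ((n:ℝ) - ((k':ℝ)+1)) * b) :=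
      (mul_le_mul_iff_right₀ hck').1 (by simpa using h3)
    rw [show a + ((n:ℝ)-((k':ℝ)+1))/((k':ℝ)+1)*b
        = (((k':ℝ)+1)*a + ((n:ℝ)-((k':ℝ)+1))*b)/((k':ℝ)+1) from by field_simp]
    exact div_nonneg hgoal hkpos.le
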